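/- Let f be a germ of a holomorphic diffeomorphism of (ℂ,0) such that f'(0) = 1 and f is not the identity, so f(z) = z + a z^{l+1} + higher order terms with a ≠ 0 and l ≥ 1. Then f has no periodic point other than 0 in any sufficiently small neighborhood of 0; more precisely, there is a neighborhood U of 0 such that no point p ∈ U \ {0} satisfies f^k(p) = p for some k ≥ 1 with all iterates f^j(p), 0 ≤ j ≤ k, remaining in U. -/

import Mathlib

open Filter Finset Topology

/-- A germ of holomorphic diffeomorphism of `(ℂ,0)` tangent to the identity
(`f'(0) = 1`) but not equal to the identity germ has no periodic point other
than `0` in a sufficiently small neighborhood of `0`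
(Leau–Fatou / Camacho's topological description of parabolic germs). -/
theorem parabolic_germ_no_periodic_points
    (f : ℂ → ℂ) (hf : AnalyticAt ℂ f 0) (hf0 : f 0 = 0)
    (hf' : deriv f 0 = 1) (hfid : ¬ (f =ᶠ[nhds (0 : ℂ)] id)) :
    ∃ U ∈ nhds (0 : ℂ), ∀ p ∈ U, p ≠ 0 →
      ∀ k : ℕ, 1 ≤ k → (∀ j ≤ k, f^[j] p ∈ U) → f^[k] p ≠ p := by
  -- Step 1: extract the vanishing order of f z - z.
  have hg : AnalyticAt ℂ (fun z => f z - z) 0 := hf.sub analyticAt_id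
  have hgne : ¬ ∀ᶠ z in 𝓝 (0:ℂ), f z - z = 0 := by
    intro h
    exact hfid (h.mono fun z hz => by simpa [sub_eq_zero] using hz)
  have hord : analyticOrderAt (fun z => f z - z) 0 ≠ ⊤ := fun h => hgne (analyticOrderAt_eq_top.mp h)
  obtain ⟨m, hm⟩ := WithTop.ne_top_iff_exists.mp hord
  obtain ⟨u, hu, hu0, hequ⟩ := (hg.analyticOrderAt_eq_natCast (n := m)).mp hm.symm
  simp only [sub_zero] at hequ
  -- m ≥ 2
  have hm0 : m ≠ 0 := by
    intro h
    have := hequ.self_of_nhds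
    rw [h] at this
    simp [hf0] at this
    exact hu0 this.symm
  have hm1 : m ≠ 1 := by
    intro h
    have hd : deriv (fun z => f z - z) 0 = 0 := by
      rw [deriv_fun_sub (hf.differentiableAt) differentiableAt_fun_id]
      simp [hf']
    have hd2 : deriv (fun z => f z - z) 0 = deriv (fun z => z ^ m • u z) 0 :=
      Filter.EventuallyEq.deriv_eq hequ
    rw [h] at hd2
    simp only [pow_one, smul_eq_mul] at hd2
    rw [deriv_fun_mul differentiableAt_fun_id hu.differentiableAt] at hd2
    simp at hd2
    rw [hd] at hd2
    exact hu0 hd2.symm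
  obtain ⟨n, rfl⟩ : ∃ n : ℕ, m = n + 1 := ⟨m - 1, by omega⟩
  have hn1 : 1 ≤ n := by omega
  set a : ℂ := u 0 with ha
  have hna : (n : ℂ) * a ≠ 0 := by
    apply mul_ne_zero _ hu0
    exact_mod_cast Nat.cast_ne_zero.mpr (by omega)
  have hn0 : (n : ℂ) ≠ 0 := by exact_mod_cast (by omega : n ≠ 0)
  -- approximate Fatou coordinate
  set G : ℂ → ℂ := fun z => ((n : ℂ) * a * z ^ n)⁻¹ with hG
  set F : ℂ → ℂ := fun z =>
    -(u z * (∑ i ∈ Finset.range n, (1 + z ^ n * u z) ^ i)) /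
      ((n : ℂ) * a * (1 + z ^ n * u z) ^ n) with hF
  have hF0 : F 0 = -1 := by
    simp only [hF]
    rw [zero_pow (by omega)]
    simp only [zero_mul, add_zero, one_pow, mul_one, Finset.sum_const, card_range,
      nsmul_eq_mul, mul_one]
    field_simp
    ring
  have hFc : ContinuousAt F 0 := by
    have hu' : ContinuousAt u 0 := hu.continuousAt
    apply ContinuousAt.div
    · fun_prop
    · fun_prop
    · rw [zero_pow (by omega)]
      simpa using hna
  have hFt : Tendsto F (𝓝[≠] (0:ℂ)) (𝓝 (-1)) := by
    rw [← hF0]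
    exact hFc.continuousWithinAt.tendsto
  -- eventual equality G(f z) - G z = F z on punctured nbhd
  have hnz : ∀ᶠ z in 𝓝 (0:ℂ), 1 + z ^ n * u z ≠ 0 := by
    have : ContinuousAt (fun z : ℂ => 1 + z ^ n * u z) 0 := by
      have := hu.continuousAt; fun_prop
    have h1 : Tendsto (fun z : ℂ => 1 + z ^ n * u z) (𝓝 0) (𝓝 (1 + 0 ^ n * u 0)) :=
      this.tendsto
    rw [zero_pow (by omega)] at h1
    simp only [zero_mul, add_zero] at h1
    exact h1.eventually_ne one_ne_zero
  have key : ∀ᶠ z in 𝓝[≠] (0:ℂ), G (f z) - G z = F z := by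
    filter_upwards [eventually_nhdsWithin_of_eventually_nhds hequ,
      eventually_nhdsWithin_of_eventually_nhds hnz,
      self_mem_nhdsWithin] with z hfz h1t (hz0 : z ≠ 0)
    have hfzeq : f z = z * (1 + z ^ n * u z) := by
      have : f z - z = z ^ (n+1) • u z := hfz
      have := sub_eq_iff_eq_add.mp this
      rw [this]; simp only [smul_eq_mul]; ring
    have hzn : z ^ n ≠ 0 := pow_ne_zero _ hz0
    have h1tn : (1 + z ^ n * u z) ^ n ≠ 0 := pow_ne_zero _ h1t
    rw [hfzeq]
    simp only [hG, hF, mul_pow]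
    have hgs : (∑ i ∈ Finset.range n, (1 + z ^ n * u z) ^ i) * (z ^ n * u z) =
        (1 + z ^ n * u z) ^ n - 1 := by
      have := geom_sum_mul (1 + z ^ n * u z) n
      simpa using this
    field_simp
    linear_combination hgs
  -- choose the neighborhood
  have key2 : ∀ᶠ z in 𝓝[≠] (0:ℂ), ‖G (f z) - G z + 1‖ < 1/2 := by
    have := hFt.eventually (Metric.ball_mem_nhds (-1 : ℂ) (by norm_num : (0:ℝ) < 1/2))
    filter_upwards [key, this] with z h1 h2
    rw [h1]
    simpa [Complex.dist_eq, sub_neg_eq_add] using h2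
  rw [eventually_nhdsWithin_iff] at key2
  obtain ⟨V, hV, hVsub⟩ := eventually_iff_exists_mem.mp key2
  obtain ⟨W, hW, hWsub⟩ := eventually_iff_exists_mem.mp (hequ.and hnz)
  refine ⟨V ∩ W, Filter.inter_mem hV hW, ?_⟩
  rintro p ⟨hpV, hpW⟩ hp0 k hk hiter hper
  -- basic facts on U := V ∩ W
  have hfne : ∀ z, z ∈ V ∩ W → z ≠ 0 → f z ≠ 0 := by
    rintro z ⟨_, hzW⟩ hz0
    obtain ⟨hfz, h1t⟩ := hWsub z hzW
    have : f z = z * (1 + z ^ n * u z) := by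
      have := sub_eq_iff_eq_add.mp hfz
      rw [this]; simp only [smul_eq_mul]; ring
    rw [this]
    exact mul_ne_zero hz0 h1t
  -- all iterates up to k are nonzero
  have hitne : ∀ j, j ≤ k → f^[j] p ≠ 0 := by
    intro j hj
    induction j with
    | zero => simpa using hp0
    | succ i ih =>
      rw [Function.iterate_succ_apply']
      exact hfne _ (hiter i (by omega)) (ih (by omega))
  -- each step decreases G by about 1
  have hstep : ∀ j, j < k → ‖G (f^[j+1] p) - G (f^[j] p) + 1‖ < 1/2 := by
    intro j hj
    rw [Function.iterate_succ_apply']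
    have hmem := hiter j (by omega)
    exact hVsub _ (hmem.1) (hitne j (by omega))
  -- telescoping sum
  have htel : ∑ j ∈ Finset.range k, (G (f^[j+1] p) - G (f^[j] p) + 1) = (k : ℂ) := by
    rw [Finset.sum_add_distrib, Finset.sum_range_sub (fun j => G (f^[j] p))]
    simp [hper]
  have hbound : ‖∑ j ∈ Finset.range k, (G (f^[j+1] p) - G (f^[j] p) + 1)‖ ≤ k * (1/2) := by
    calc ‖∑ j ∈ Finset.range k, (G (f^[j+1] p) - G (f^[j] p) + 1)‖
        ≤ ∑ j ∈ Finset.range k, ‖G (f^[j+1] p) - G (f^[j] p) + 1‖ := norm_sum_le _ _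
      _ ≤ ∑ j ∈ Finset.range k, (1/2 : ℝ) := by
          apply Finset.sum_le_sum
          intro j hj
          exact le_of_lt (hstep j (Finset.mem_range.mp hj))
      _ = k * (1/2) := by simp [mul_comm]
  rw [htel] at hbound
  simp only [Complex.norm_natCast] at hbound
  have : (1 : ℝ) ≤ k := by exact_mod_cast hk
  linarith
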